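/- Let u ∈ L²([0,T]; H) with ∫₀ᵀ |u(s)|² ds ≤ N, and let X̄ : [0,T] → H¹₀(0,1) be a solution of the skeleton equation d X̄_t = [A X̄_t + B(X̄_t) + f̄(X̄_t) + σ₁(X̄_t)Q₁^{1/2} u(t)] dt, X̄₀ = x ∈ L²(0,1), where f̄ is Lipschitz with linear growth, and ‖σ₁(z)Q₁^{1/2}‖_{HS} ≤ C(1 + |z|). Then there is a constant C_{N,T} such that sup_{t∈[0,T]} |X̄_t|²_{L²} + ∫₀ᵀ ‖X̄_s‖²_{H¹₀} ds ≤ C_{N,T}(1 + |x|²). -/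

import Mathlib

open MeasureTheory intervalIntegral RealInnerProductSpace

/-- One doubling step of the integral-form Gronwall inequality. -/
lemma gronwall_step10 {a w : ℝ → ℝ} {r t : ℝ}
    (hrt : r ≤ t)
    (hw1 : ∀ s ∈ Set.Icc r t, 1 ≤ w s)
    (hwc : ContinuousOn w (Set.Icc r t))
    (ha : IntegrableOn a (Set.Icc r t))
    (haw : IntegrableOn (fun s => a s * w s) (Set.Icc r t))
    (ha0 : ∀ s ∈ Set.Icc r t, 0 ≤ a s)
    (key : ∀ s ∈ Set.Icc r t, w s - w r ≤ ∫ τ in r..s, a τ * w τ)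
    (hsmall : (∫ s in r..t, a s) ≤ 1/2) :
    w t ≤ 2 * w r := by
  obtain ⟨m, hm, hmax⟩ := isCompact_Icc.exists_isMaxOn (Set.nonempty_Icc.2 hrt) hwc
  have hrm : r ≤ m := hm.1
  have hmt : m ≤ t := hm.2
  have hM1 : (1:ℝ) ≤ w m := hw1 m hm
  have hsub1 : Set.Ioc r m ⊆ Set.Icc r t :=
    Set.Ioc_subset_Icc_self.trans (Set.Icc_subset_Icc_right hmt)
  have hsub2 : Set.Ioc r t ⊆ Set.Icc r t := Set.Ioc_subset_Icc_self
  have h1 : (∫ τ in r..m, a τ * w τ) ≤ (w m) * ∫ s in r..t, a s := by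
    rw [intervalIntegral.integral_of_le hrm, intervalIntegral.integral_of_le hrt]
    calc (∫ τ in Set.Ioc r m, a τ * w τ)
        ≤ ∫ τ in Set.Ioc r m, a τ * w m := by
          refine setIntegral_mono_on (haw.mono_set hsub1) ((ha.mono_set hsub1).mul_const _)
            measurableSet_Ioc (fun s hs => ?_)
          exact mul_le_mul_of_nonneg_left (hmax (hsub1 hs)) (ha0 s (hsub1 hs))
      _ = (∫ τ in Set.Ioc r m, a τ) * w m := by rw [MeasureTheory.integral_mul_const]
      _ ≤ (∫ τ in Set.Ioc r t, a τ) * w m := by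
          refine mul_le_mul_of_nonneg_right ?_ (by linarith)
          refine setIntegral_mono_set (ha.mono_set hsub2) ?_ ?_
          · exact ae_restrict_of_forall_mem measurableSet_Ioc (fun s hs => ha0 s (hsub2 hs))
          · exact HasSubset.Subset.eventuallyLE (Set.Ioc_subset_Ioc_right hmt)
      _ = (w m) * ∫ τ in Set.Ioc r t, a τ := mul_comm _ _
  have h2 := key m hm
  have h3 : w m ≤ 2 * w r := by nlinarith
  have h4 : w t ≤ w m := hmax (Set.right_mem_Icc.2 hrt)
  linarith

/-- Iterated Gronwall inequality in integral form. -/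
lemma gronwall_iter10 {a w : ℝ → ℝ} {T : ℝ}
    (hw1 : ∀ s ∈ Set.Icc (0:ℝ) T, 1 ≤ w s)
    (hwc : ContinuousOn w (Set.Icc (0:ℝ) T))
    (ha : IntegrableOn a (Set.Icc (0:ℝ) T))
    (haw : IntegrableOn (fun s => a s * w s) (Set.Icc (0:ℝ) T))
    (ha0 : ∀ s ∈ Set.Icc (0:ℝ) T, 0 ≤ a s)
    (key : ∀ r t, 0 ≤ r → r ≤ t → t ≤ T → w t - w r ≤ ∫ τ in r..t, a τ * w τ) :
    ∀ n : ℕ, ∀ r t, 0 ≤ r → r ≤ t → t ≤ T → (∫ s in r..t, a s) ≤ (n+1)/2 →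
      w t ≤ 2^(n+1) * w r := by
  intro n
  induction n with
  | zero =>
    intro r t h0 hrt hT hint
    have hsub : Set.Icc r t ⊆ Set.Icc 0 T := Set.Icc_subset_Icc h0 hT
    have := gronwall_step10 hrt (fun s hs => hw1 s (hsub hs)) (hwc.mono hsub)
      (ha.mono_set hsub) (haw.mono_set hsub) (fun s hs => ha0 s (hsub hs))
      (fun s hs => key r s h0 hs.1 (hs.2.trans hT)) (by norm_num at hint ⊢; linarith)
    simpa using this
  | succ n ih =>
    intro r t h0 hrt hT hint
    have hsub : Set.Icc r t ⊆ Set.Icc 0 T := Set.Icc_subset_Icc h0 hT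
    set F : ℝ → ℝ := fun s => ∫ τ in r..s, a τ with hF
    have hFc : ContinuousOn F (Set.Icc r t) := by
      have : IntegrableOn a (Set.uIcc r t) := by
        rw [Set.uIcc_of_le hrt]; exact ha.mono_set hsub
      simpa [hF, Set.uIcc_of_le hrt] using continuousOn_primitive_interval this
    have hFr : F r = 0 := by simp [hF]
    have hFt0 : 0 ≤ F t :=
      intervalIntegral.integral_nonneg hrt (fun s hs => ha0 s (hsub hs))
    set c : ℝ := min (((n:ℝ)+1)/2) (F t) with hc
    have hc0 : 0 ≤ c := le_min (by positivity) hFt0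
    have hcFt : c ≤ F t := min_le_right _ _
    have hmem : c ∈ Set.Icc (F r) (F t) := by rw [hFr]; exact ⟨hc0, hcFt⟩
    obtain ⟨m, hm, hFm⟩ := intermediate_value_Icc hrt hFc hmem
    have hrm : r ≤ m := hm.1
    have hmt : m ≤ t := hm.2
    have hia : ∀ p q : ℝ, r ≤ p → p ≤ q → q ≤ t → IntervalIntegrable a volume p q := by
      intro p q hp hpq hq
      have : IntegrableOn a (Set.uIcc p q) := by
        rw [Set.uIcc_of_le hpq]
        exact ha.mono_set ((Set.Icc_subset_Icc hp hq).trans hsub)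
      exact this.intervalIntegrable
    have hadd : (∫ τ in r..m, a τ) + (∫ τ in m..t, a τ) = ∫ τ in r..t, a τ :=
      intervalIntegral.integral_add_adjacent_intervals
        (hia r m le_rfl hrm hmt) (hia m t hrm hmt le_rfl)
    have h1 : w m ≤ 2^(n+1) * w r := by
      refine ih r m h0 hrm (hmt.trans hT) ?_
      calc (∫ s in r..m, a s) = c := hFm
        _ ≤ ((n:ℝ)+1)/2 := min_le_left _ _
    have hFt : F t ≤ ((n:ℝ)+1+1)/2 := by push_cast at hint; exact hint
    have he : (∫ τ in m..t, a τ) = F t - c := by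
      have h1' : F m = (∫ τ in r..m, a τ) := rfl
      have h2' : F t = (∫ τ in r..t, a τ) := rfl
      rw [h2']; rw [h1'] at hFm; linarith
    have hsmall : (∫ τ in m..t, a τ) ≤ 1/2 := by
      rcases le_total (((n:ℝ)+1)/2) (F t) with h | h
      · rw [he, hc, min_eq_left h]; linarith
      · rw [he, hc, min_eq_right h]; linarith
    have hsub2 : Set.Icc m t ⊆ Set.Icc 0 T := Set.Icc_subset_Icc (h0.trans hrm) hT
    have h2 : w t ≤ 2 * w m :=
      gronwall_step10 hmt (fun s hs => hw1 s (hsub2 hs)) (hwc.mono hsub2)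
        (ha.mono_set hsub2) (haw.mono_set hsub2) (fun s hs => ha0 s (hsub2 hs))
        (fun s hs => key m s (h0.trans hrm) hs.1 (hs.2.trans hT)) hsmall
    have hwr : 0 ≤ w r := by linarith [hw1 r ⟨h0, hrt.trans hT⟩]
    calc w t ≤ 2 * w m := h2
      _ ≤ 2 * (2^(n+1) * w r) := by nlinarith
      _ = 2^(n+1+1) * w r := by ring

lemma poly_aux10 {b v : ℝ} (hb : 0 ≤ b) (hv : 0 ≤ v) :
    (b + b^2) * (1+v) ≤ 4 * (1+b^2) * (1+v^2) := by
  nlinarith [sq_nonneg (b-1), sq_nonneg (v-1), sq_nonneg (b*v-1), sq_nonneg (b-v),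
    sq_nonneg (b*v - b), mul_nonneg hb hv, sq_nonneg (b*v - v)]


set_option maxHeartbeats 1000000 in
/-- A priori energy estimate for the skeleton equation
`dX̄ = [A X̄ + B(X̄) + f̄(X̄) + σ₁(X̄)Q₁^{1/2} u(t)] dt`, `X̄₀ = x`, in the abstract Gelfand
setting: `H` a Hilbert space (playing `L²(0,1)`), `Vnorm z` the `H¹₀`-norm of `z`,
`⟪A z, z⟫ = -(Vnorm z)²` (Dirichlet Laplacian), `⟪B z, z⟫ = 0` (Burgers cancellation),
`f̄` Lipschitz with linear growth, `‖σ z‖ ≤ C(1 + ‖z‖)` (the HS bound on `σ₁(z)Q₁^{1/2}`),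
and a control `u` with `∫₀ᵀ ‖u‖² ≤ N`. Conclusion: there is `C_{N,T}` with
`sup_{t∈[0,T]} ‖X̄_t‖² + ∫₀ᵀ (Vnorm X̄_s)² ds ≤ C_{N,T} (1 + ‖x‖²)`. -/
theorem stmt10
    {H : Type*} [NormedAddCommGroup H] [InnerProductSpace ℝ H] [CompleteSpace H]
    (T N : ℝ) (hT : 0 < T) (hN : 0 < N)
    (Vnorm : H → ℝ) (hV : ∀ z, 0 ≤ Vnorm z)
    (A B fbar : H → H) (σ : H → H →L[ℝ] H)
    (C : ℝ) (hC : 0 < C)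
    (hA : ∀ z, (inner ℝ (A z) z : ℝ) = -(Vnorm z)^2)
    (hB : ∀ z, (inner ℝ (B z) z : ℝ) = 0)
    (hfLip : LipschitzWith (Real.toNNReal C) fbar)
    (hfGrowth : ∀ z, ‖fbar z‖ ≤ C * (1 + ‖z‖))
    (hσ : ∀ z, ‖σ z‖ ≤ C * (1 + ‖z‖)) :
    ∃ C' > 0, ∀ (u : ℝ → H) (x : H) (X : ℝ → H),
      IntegrableOn (fun t => ‖u t‖^2) (Set.Icc 0 T) →
      (∫ t in (0:ℝ)..T, ‖u t‖^2) ≤ N →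
      X 0 = x →
      (∀ t ∈ Set.Icc (0:ℝ) T,
        HasDerivAt X (A (X t) + B (X t) + fbar (X t) + σ (X t) (u t)) t) →
      IntegrableOn (fun t => (Vnorm (X t))^2) (Set.Icc 0 T) →
      ∀ t ∈ Set.Icc (0:ℝ) T,
        ‖X t‖^2 + (∫ s in (0:ℝ)..T, (Vnorm (X s))^2) ≤ C' * (1 + ‖x‖^2) := by
  have hTN : 0 < T + N := by linarith
  set n₀ : ℕ := ⌈16*C*(T+N)⌉₊ with hn₀
  have h2pos : (0:ℝ) < 2^(n₀+1) := by positivity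
  have hCpos : (0:ℝ) < 2^(n₀+1) * (1 + 8*C*(T+N)) + 1 := by
    have h1 : (0:ℝ) < 1 + 8*C*(T+N) := by nlinarith
    nlinarith [mul_pos h2pos h1]
  refine ⟨2^(n₀+1) * (1 + 8*C*(T+N)) + 1, hCpos, ?_⟩
  intro u x X hu huN hx0 hX hVint t ht
  -- continuity and boundedness of X
  have hXc : ContinuousOn X (Set.Icc 0 T) :=
    fun s hs => ((hX s hs).continuousAt).continuousWithinAt
  obtain ⟨m0, hm0, hmax0⟩ := isCompact_Icc.exists_isMaxOn
    (⟨0, Set.left_mem_Icc.2 hT.le⟩ : (Set.Icc (0:ℝ) T).Nonempty) hXc.norm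
  set R : ℝ := ‖X m0‖ with hRdef
  have hRb : ∀ s ∈ Set.Icc (0:ℝ) T, ‖X s‖ ≤ R := fun s hs => hmax0 hs
  have hR0 : 0 ≤ R := norm_nonneg _
  -- abbreviations
  set X' : ℝ → H := fun s => A (X s) + B (X s) + fbar (X s) + σ (X s) (u s) with hX'def
  set D : ℝ → ℝ := fun s => 2 * (inner ℝ (X' s) (X s) : ℝ) with hDdef
  set φ : ℝ → ℝ := fun s => ‖X s‖^2 with hφdef
  set w : ℝ → ℝ := fun s => 1 + ‖X s‖^2 with hwdef
  set a : ℝ → ℝ := fun s => 8*C*(1 + ‖u s‖^2) with hadef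
  set ρ : ℝ → ℝ :=
    fun s => (inner ℝ (fbar (X s)) (X s) : ℝ) + (inner ℝ (σ (X s) (u s)) (X s) : ℝ) with hρdef
  -- derivative of φ
  have hφderiv : ∀ s ∈ Set.Icc (0:ℝ) T, HasDerivAt φ (D s) s := by
    intro s hs
    have h : HasDerivAt X (X' s) s := hX s hs
    have h2 : HasDerivAt (fun τ => (inner ℝ (X τ) (X τ) : ℝ))
        ((inner ℝ (X s) (X' s) : ℝ) + (inner ℝ (X' s) (X s) : ℝ)) s := HasDerivAt.inner ℝ h h
    have h3 : HasDerivAt (fun τ => (inner ℝ (X τ) (X τ) : ℝ)) (D s) s := by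
      convert h2 using 1
      show 2 * (inner ℝ (X' s) (X s) : ℝ) = _
      rw [real_inner_comm (X s) (X' s)]; ring
    have h4 : (fun τ => (inner ℝ (X τ) (X τ) : ℝ)) = φ := by
      funext τ; rw [hφdef]; exact real_inner_self_eq_norm_sq _
    rwa [h4] at h3
  -- value of D
  have hDval : ∀ s, D s = -2*(Vnorm (X s))^2 + 2 * ρ s := by
    intro s
    show 2 * (inner ℝ (A (X s) + B (X s) + fbar (X s) + σ (X s) (u s)) (X s) : ℝ)
      = -2*(Vnorm (X s))^2 + 2 * ρ s
    rw [inner_add_left, inner_add_left, inner_add_left, hA, hB, hρdef]; ring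
  -- Cauchy–Schwarz bounds
  have hρabs : ∀ s, |ρ s| ≤ C * (1+‖X s‖) * ‖X s‖ * (1 + ‖u s‖) := by
    intro s
    have h1 : |(inner ℝ (fbar (X s)) (X s) : ℝ)| ≤ C*(1+‖X s‖) * ‖X s‖ :=
      (abs_real_inner_le_norm _ _).trans
        (mul_le_mul_of_nonneg_right (hfGrowth _) (norm_nonneg _))
    have h2 : |(inner ℝ (σ (X s) (u s)) (X s) : ℝ)| ≤ C*(1+‖X s‖) * ‖u s‖ * ‖X s‖ := by
      refine (abs_real_inner_le_norm _ _).trans ?_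
      have h3 : ‖σ (X s) (u s)‖ ≤ C*(1+‖X s‖) * ‖u s‖ :=
        ((σ (X s)).le_opNorm (u s)).trans
          (mul_le_mul_of_nonneg_right (hσ _) (norm_nonneg _))
      exact mul_le_mul_of_nonneg_right h3 (norm_nonneg _)
    calc |ρ s| ≤ |(inner ℝ (fbar (X s)) (X s) : ℝ)| + |(inner ℝ (σ (X s) (u s)) (X s) : ℝ)| := by
          rw [hρdef]; exact abs_add_le _ _
      _ ≤ C*(1+‖X s‖) * ‖X s‖ + C*(1+‖X s‖) * ‖u s‖ * ‖X s‖ := add_le_add h1 h2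
      _ = C * (1+‖X s‖) * ‖X s‖ * (1 + ‖u s‖) := by ring
  have hρbound : ∀ s, 2 * |ρ s| ≤ a s * w s := by
    intro s
    have h4 := poly_aux10 (norm_nonneg (X s)) (norm_nonneg (u s))
    have h5 := hρabs s
    have h6 : C*((‖X s‖ + ‖X s‖^2)*(1+‖u s‖)) ≤ C*(4*(1+‖X s‖^2)*(1+‖u s‖^2)) :=
      mul_le_mul_of_nonneg_left h4 hC.le
    show 2 * |ρ s| ≤ 8*C*(1 + ‖u s‖^2) * (1 + ‖X s‖^2)
    nlinarith [abs_nonneg (ρ s)]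
  -- basic facts
  have ha0 : ∀ s, 0 ≤ a s := fun s => by
    show (0:ℝ) ≤ 8*C*(1 + ‖u s‖^2); positivity
  have hw1 : ∀ s, 1 ≤ w s := fun s => by
    show (1:ℝ) ≤ 1 + ‖X s‖^2; nlinarith [sq_nonneg ‖X s‖]
  have hwc : ContinuousOn w (Set.Icc (0:ℝ) T) := by
    rw [hwdef]; exact continuousOn_const.add (hXc.norm.pow 2)
  have hwR : ∀ s ∈ Set.Icc (0:ℝ) T, w s ≤ 1 + R^2 := fun s hs => by
    have h := hRb s hs
    show 1 + ‖X s‖^2 ≤ 1 + R^2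
    nlinarith [norm_nonneg (X s)]
  -- integrability
  have hfin : volume (Set.Icc (0:ℝ) T) < ⊤ := measure_Icc_lt_top
  have h1int : IntegrableOn (fun s => 1 + ‖u s‖^2) (Set.Icc (0:ℝ) T) :=
    (integrableOn_const hfin.ne).add hu
  have haint : IntegrableOn a (Set.Icc (0:ℝ) T) := by
    have := h1int.const_mul (8*C)
    exact this
  have hawint : IntegrableOn (fun s => a s * w s) (Set.Icc (0:ℝ) T) := by
    refine Integrable.mono' (haint.mul_const (1+R^2))
      (haint.aestronglyMeasurable.mul (hwc.aestronglyMeasurable measurableSet_Icc)) ?_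
    refine (ae_restrict_mem measurableSet_Icc).mono (fun s hs => ?_)
    rw [Real.norm_eq_abs, abs_of_nonneg (mul_nonneg (ha0 s) (by linarith [hw1 s]))]
    exact mul_le_mul_of_nonneg_left (hwR s hs) (ha0 s)
  have hDmeas : AEStronglyMeasurable D (volume.restrict (Set.Icc (0:ℝ) T)) := by
    have hres : volume.restrict (Set.Icc (0:ℝ) T) = volume.restrict (Set.Ioo (0:ℝ) T) :=
      (Measure.restrict_congr_set Ioo_ae_eq_Icc).symm
    rw [hres]
    refine ((measurable_deriv φ).aestronglyMeasurable).congr ?_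
    refine (ae_restrict_mem measurableSet_Ioo).mono (fun s hs => ?_)
    exact (hφderiv s (Set.Ioo_subset_Icc_self hs)).deriv
  have hgint : IntegrableOn
      (fun s => 2*(Vnorm (X s))^2 + 8*C*(1+R^2)*(1+‖u s‖^2)) (Set.Icc (0:ℝ) T) :=
    (hVint.const_mul 2).add (h1int.const_mul (8*C*(1+R^2)))
  have hDbound : ∀ s ∈ Set.Icc (0:ℝ) T,
      |D s| ≤ 2*(Vnorm (X s))^2 + 8*C*(1+R^2)*(1+‖u s‖^2) := by
    intro s hs
    have h7 : a s * w s ≤ 8*C*(1+R^2)*(1+‖u s‖^2) := by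
      have hb2 : ‖X s‖^2 ≤ R^2 := pow_le_pow_left₀ (norm_nonneg _) (hRb s hs) 2
      have h8C : (0:ℝ) ≤ 8*C*(1+‖u s‖^2) := by positivity
      show 8*C*(1 + ‖u s‖^2) * (1 + ‖X s‖^2) ≤ 8*C*(1+R^2)*(1+‖u s‖^2)
      nlinarith [mul_le_mul_of_nonneg_left hb2 h8C]
    rw [hDval s, abs_le]
    constructor
    · nlinarith [hρbound s, sq_nonneg (Vnorm (X s)), neg_abs_le (ρ s)]
    · nlinarith [hρbound s, sq_nonneg (Vnorm (X s)), le_abs_self (ρ s)]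
  have hDint : IntegrableOn D (Set.Icc (0:ℝ) T) :=
    Integrable.mono' hgint hDmeas
      ((ae_restrict_mem measurableSet_Icc).mono
        (fun s hs => by rw [Real.norm_eq_abs]; exact hDbound s hs))
  -- interval integrability helpers
  have hii : ∀ (f : ℝ → ℝ), IntegrableOn f (Set.Icc (0:ℝ) T) →
      ∀ r t' : ℝ, 0 ≤ r → r ≤ t' → t' ≤ T → IntervalIntegrable f volume r t' := by
    intro f hf r t' h0 hrt' hT'
    have : IntegrableOn f (Set.uIcc r t') := by
      rw [Set.uIcc_of_le hrt']
      exact hf.mono_set (Set.Icc_subset_Icc h0 hT')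
    exact this.intervalIntegrable
  -- key Gronwall input
  have key : ∀ r t', 0 ≤ r → r ≤ t' → t' ≤ T → w t' - w r ≤ ∫ τ in r..t', a τ * w τ := by
    intro r t' h0 hrt' hT'
    have hDii : IntervalIntegrable D volume r t' := hii D hDint r t' h0 hrt' hT'
    have hawii : IntervalIntegrable (fun s => a s * w s) volume r t' :=
      hii _ hawint r t' h0 hrt' hT'
    have hftc : (∫ s in r..t', D s) = φ t' - φ r := by
      refine intervalIntegral.integral_eq_sub_of_hasDerivAt (fun s hs => ?_) hDii
      rw [Set.uIcc_of_le hrt'] at hs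
      exact hφderiv s (Set.Icc_subset_Icc h0 hT' hs)
    have hmono : (∫ s in r..t', D s) ≤ ∫ s in r..t', a s * w s := by
      refine intervalIntegral.integral_mono_on hrt' hDii hawii (fun s _ => ?_)
      rw [hDval s]
      nlinarith [hρbound s, sq_nonneg (Vnorm (X s)), le_abs_self (ρ s)]
    have heq : w t' - w r = φ t' - φ r := by
      simp only [hwdef, hφdef]; ring
    linarith
  -- total mass of a
  have haT : (∫ s in (0:ℝ)..T, a s) ≤ 8*C*(T+N) := by
    have hu_ii : IntervalIntegrable (fun s => ‖u s‖^2) volume 0 T :=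
      hii _ hu 0 T le_rfl hT.le le_rfl
    have h2 : (∫ s in (0:ℝ)..T, a s) = 8*C*(T + ∫ s in (0:ℝ)..T, ‖u s‖^2) := by
      have he : (∫ s in (0:ℝ)..T, a s) = ∫ s in (0:ℝ)..T, 8*C*(1+‖u s‖^2) := rfl
      rw [he, intervalIntegral.integral_const_mul,
        intervalIntegral.integral_add intervalIntegrable_const hu_ii]
      simp only [intervalIntegral.integral_const, smul_eq_mul, mul_one, sub_zero]
    rw [h2]
    have h8 : (0:ℝ) ≤ 8*C := by positivity
    have h9 := mul_le_mul_of_nonneg_left (add_le_add_left huN T) h8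
    linarith
  have hΛbound : ∀ r t', 0 ≤ r → r ≤ t' → t' ≤ T →
      (∫ s in r..t', a s) ≤ ((n₀:ℝ)+1)/2 := by
    intro r t' h0 hrt' hT'
    have h1 : (∫ s in r..t', a s) ≤ ∫ s in (0:ℝ)..T, a s := by
      rw [intervalIntegral.integral_of_le hrt', intervalIntegral.integral_of_le hT.le]
      refine setIntegral_mono_set (haint.mono_set Set.Ioc_subset_Icc_self) ?_ ?_
      · exact ae_restrict_of_forall_mem measurableSet_Ioc (fun s _ => ha0 s)
      · exact HasSubset.Subset.eventuallyLE (Set.Ioc_subset_Ioc h0 hT')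
    have h3 : 16*C*(T+N) ≤ ((n₀:ℝ)+1) := by
      have hle := Nat.le_ceil (16*C*(T+N))
      rw [hn₀]; push_cast; linarith
    linarith [haT]
  -- apply Gronwall
  have hgron := gronwall_iter10 (fun s _ => hw1 s) hwc haint hawint (fun s _ => ha0 s) key n₀
  have hsup : ∀ t' ∈ Set.Icc (0:ℝ) T, w t' ≤ 2^(n₀+1) * w 0 := by
    intro t' ht'
    have := hgron 0 t' le_rfl ht'.1 ht'.2 (by push_cast; exact hΛbound 0 t' le_rfl ht'.1 ht'.2)
    exact this
  have hw0 : w 0 = 1 + ‖x‖^2 := by rw [hwdef]; simp [hx0]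
  -- bound on the integral of Vnorm²
  have hDii0 : IntervalIntegrable D volume 0 T := hii D hDint 0 T le_rfl hT.le le_rfl
  have hawii0 : IntervalIntegrable (fun s => a s * w s) volume 0 T :=
    hii _ hawint 0 T le_rfl hT.le le_rfl
  have haii0 : IntervalIntegrable a volume 0 T := hii a haint 0 T le_rfl hT.le le_rfl
  have hVii : IntervalIntegrable (fun s => (Vnorm (X s))^2) volume 0 T :=
    hii _ hVint 0 T le_rfl hT.le le_rfl
  have hftc0 : (∫ s in (0:ℝ)..T, D s) = φ T - φ 0 := by
    refine intervalIntegral.integral_eq_sub_of_hasDerivAt (fun s hs => ?_) hDii0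
    rw [Set.uIcc_of_le hT.le] at hs
    exact hφderiv s hs
  have hint2 : (∫ s in (0:ℝ)..T, 2*(Vnorm (X s))^2)
      ≤ ∫ s in (0:ℝ)..T, (a s * w s - D s) := by
    refine intervalIntegral.integral_mono_on hT.le (hVii.const_mul 2) (hawii0.sub hDii0)
      (fun s _ => ?_)
    rw [hDval s]
    nlinarith [hρbound s, le_abs_self (ρ s)]
  rw [intervalIntegral.integral_const_mul, intervalIntegral.integral_sub hawii0 hDii0,
    hftc0] at hint2
  have hIaw : (∫ s in (0:ℝ)..T, a s * w s) ≤ 8*C*(T+N) * (2^(n₀+1) * (1+‖x‖^2)) := by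
    have hW0 : (0:ℝ) ≤ 2^(n₀+1) * (1+‖x‖^2) := by positivity
    calc (∫ s in (0:ℝ)..T, a s * w s)
        ≤ ∫ s in (0:ℝ)..T, a s * (2^(n₀+1) * (1+‖x‖^2)) := by
          refine intervalIntegral.integral_mono_on hT.le hawii0 (haii0.mul_const _)
            (fun s hs => ?_)
          have h := hsup s hs; rw [hw0] at h
          exact mul_le_mul_of_nonneg_left h (ha0 s)
      _ = (∫ s in (0:ℝ)..T, a s) * (2^(n₀+1) * (1+‖x‖^2)) :=
          intervalIntegral.integral_mul_const _ _
      _ ≤ 8*C*(T+N) * (2^(n₀+1) * (1+‖x‖^2)) := mul_le_mul_of_nonneg_right haT hW0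
  have hφT : 0 ≤ φ T := by rw [hφdef]; positivity
  have hφ0 : φ 0 = ‖x‖^2 := by rw [hφdef]; simp [hx0]
  have hXt : ‖X t‖^2 ≤ 2^(n₀+1) * (1+‖x‖^2) := by
    have h := hsup t ht; rw [hw0] at h
    have h2 : w t = 1 + ‖X t‖^2 := by rw [hwdef]
    linarith
  have hx2 : (0:ℝ) ≤ ‖x‖^2 := sq_nonneg _
  have hq : (0:ℝ) ≤ 8*C*(T+N) * (2^(n₀+1) * (1+‖x‖^2)) := by positivity
  nlinarith [hint2, hIaw, hφT, hφ0, hXt, h2pos, mul_pos (mul_pos (by linarith : (0:ℝ) < 8*C) hTN) (mul_pos h2pos (by nlinarith : (0:ℝ) < 1+‖x‖^2))]
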